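/- Let (A, m) be a commutative local ring, let f ∈ m be a non-zero-divisor of A, let r ≥ 1 be an integer, let M and M' be free A-modules of rank r, and let φ : M → M' be an injective A-linear map whose cokernel M'/φ(M) is isomorphic as an A-module to A/(f). Then there exist bases (e_1, …, e_r) of M and (e'_1, …, e'_r) of M' such that φ(e_1) = f·e'_1 and φ(e_i) = e'_i for all i = 2, …, r. -/

import Mathlib

theorem basis_normalize
    (A : Type*) [CommRing A] [IsLocalRing A]
    (f : A) (hf : f ∈ IsLocalRing.maximalIdeal A)
    (r : ℕ) (hr : 0 < r)
    (M' : Type*) [AddCommGroup M'] [Module A M'] (bM' : Module.Basis (Fin r) A M')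
    (ψ : M' →ₗ[A] A ⧸ Ideal.span {f}) (hψ : Function.Surjective ψ) :
    ∃ c : Module.Basis (Fin r) A M', ψ (c ⟨0, hr⟩) = 1 ∧ ∀ j, j ≠ ⟨0, hr⟩ → ψ (c j) = 0 := by
  set z : Fin r := ⟨0, hr⟩ with hz
  -- lift coordinates
  have hlift : ∀ j : Fin r, ∃ a : A, Ideal.Quotient.mk (Ideal.span {f}) a = ψ (bM' j) :=
    fun j => Ideal.Quotient.mk_surjective (ψ (bM' j))
  choose a ha using hlift
  -- some coordinate is a unit
  have hspanm : Ideal.span {f} ≤ IsLocalRing.maximalIdeal A := by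
    rw [Ideal.span_le, Set.singleton_subset_iff]; exact hf
  have hexu : ∃ i, IsUnit (a i) := by
    by_contra h
    push_neg at h
    have hm : ∀ i, a i ∈ IsLocalRing.maximalIdeal A := fun i => by
      by_contra hc; exact h i (IsLocalRing.notMem_maximalIdeal.mp hc)
    obtain ⟨x, hx⟩ := hψ 1
    have hxr := bM'.sum_repr x
    have h1 : (1 : A ⧸ Ideal.span {f}) =
        Ideal.Quotient.mk (Ideal.span {f}) (∑ j, bM'.repr x j * a j) := by
      rw [← hx]
      nth_rewrite 1 [← hxr]
      rw [map_sum, map_sum]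
      refine Finset.sum_congr rfl fun j _ => ?_
      rw [map_smul, ← ha j, Algebra.smul_def, Ideal.Quotient.algebraMap_eq, ← map_mul]
    have h2 : (∑ j, bM'.repr x j * a j) - 1 ∈ Ideal.span {f} := by
      rw [← Ideal.Quotient.eq]
      exact h1.symm
    have h3 : (∑ j, bM'.repr x j * a j) ∈ IsLocalRing.maximalIdeal A :=
      Ideal.sum_mem _ fun j _ => (IsLocalRing.maximalIdeal A).mul_mem_left _ (hm j)
    have h4 : (1 : A) ∈ IsLocalRing.maximalIdeal A := by
      have := (IsLocalRing.maximalIdeal A).sub_mem h3 (hspanm h2)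
      simpa using this
    exact (IsLocalRing.maximalIdeal.isMaximal A).ne_top (Ideal.eq_top_of_isUnit_mem _ h4 isUnit_one)
  obtain ⟨i, hu⟩ := hexu
  -- swap so that the unit is in position 0
  set σ : Equiv.Perm (Fin r) := Equiv.swap z i with hσ
  set b : Module.Basis (Fin r) A M' := bM'.reindex σ with hb
  have hbap : ∀ j, b j = bM' (σ j) := by
    intro j
    rw [hb, Module.Basis.reindex_apply, hσ, Equiv.symm_swap]
  have ha' : ∀ j, Ideal.Quotient.mk (Ideal.span {f}) (a (σ j)) = ψ (b j) := fun j => by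
    rw [hbap]; exact ha (σ j)
  have hu0 : IsUnit (a (σ z)) := by
    rw [hσ, Equiv.swap_apply_left]; exact hu
  set u := hu0.unit with hu0u
  have huv : (u : A) = a (σ z) := rfl
  -- elementary transformation
  set T : M' →ₗ[A] M' := b.constr ℕ
    (fun j => if j = z then ((u⁻¹ : Aˣ) : A) • b z else b j - (a (σ j) * ((u⁻¹ : Aˣ) : A)) • b z)
    with hT
  set S : M' →ₗ[A] M' := b.constr ℕ
    (fun j => if j = z then ((u : Aˣ) : A) • b z else b j + (a (σ j)) • b z) with hS
  have hTS : T.comp S = LinearMap.id := by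
    apply b.ext
    intro j
    rw [LinearMap.comp_apply, LinearMap.id_apply]
    by_cases hj : j = z
    · subst hj
      rw [hS, Module.Basis.constr_basis, if_pos rfl, map_smul, hT, Module.Basis.constr_basis, if_pos rfl,
        smul_smul, Units.mul_inv, one_smul]
    · rw [hS, Module.Basis.constr_basis, if_neg hj, map_add, map_smul, hT, Module.Basis.constr_basis,
        Module.Basis.constr_basis, if_neg hj, if_pos rfl, smul_smul]
      abel
  have hST : S.comp T = LinearMap.id := by
    apply b.ext
    intro j
    rw [LinearMap.comp_apply, LinearMap.id_apply]
    by_cases hj : j = z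
    · subst hj
      rw [hT, Module.Basis.constr_basis, if_pos rfl, map_smul, hS, Module.Basis.constr_basis, if_pos rfl,
        smul_smul, Units.inv_mul, one_smul]
    · rw [hT, Module.Basis.constr_basis, if_neg hj, map_sub, map_smul, hS, Module.Basis.constr_basis,
        Module.Basis.constr_basis, if_neg hj, if_pos rfl, smul_smul, mul_assoc, Units.inv_mul, mul_one]
      abel
  set eqv : M' ≃ₗ[A] M' := LinearEquiv.ofLinear T S hTS hST with heqv
  set c : Module.Basis (Fin r) A M' := b.map eqv with hc
  have hcap : ∀ j, c j = T (b j) := fun j => by rw [hc, Module.Basis.map_apply]; rfl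
  refine ⟨c, ?_, ?_⟩
  · rw [hcap, hT, Module.Basis.constr_basis, if_pos rfl, map_smul, ← ha' z, ← huv, Algebra.smul_def,
      Ideal.Quotient.algebraMap_eq, ← map_mul, Units.inv_mul, map_one]
  · intro j hj
    rw [hcap, hT, Module.Basis.constr_basis, if_neg hj, map_sub, map_smul, ← ha' j, ← ha' z, ← huv,
      Algebra.smul_def, Ideal.Quotient.algebraMap_eq, ← map_mul, mul_assoc, Units.inv_mul,
      mul_one, sub_self]

theorem local_ring_normal_form
    (A : Type*) [CommRing A] [IsLocalRing A]
    (f : A) (hf : f ∈ IsLocalRing.maximalIdeal A) (hfnzd : f ∈ nonZeroDivisors A)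
    (r : ℕ) (hr : 0 < r)
    (M M' : Type*) [AddCommGroup M] [Module A M] [AddCommGroup M'] [Module A M']
    (bM : Module.Basis (Fin r) A M) (bM' : Module.Basis (Fin r) A M')
    (φ : M →ₗ[A] M') (hφ : Function.Injective φ)
    (hcoker : Nonempty ((M' ⧸ LinearMap.range φ) ≃ₗ[A] (A ⧸ Ideal.span {f}))) :
    ∃ (e : Module.Basis (Fin r) A M) (e' : Module.Basis (Fin r) A M'),
      φ (e ⟨0, hr⟩) = f • e' ⟨0, hr⟩ ∧
      ∀ i : Fin r, i ≠ ⟨0, hr⟩ → φ (e i) = e' i := by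
  set z : Fin r := ⟨0, hr⟩ with hz
  obtain ⟨eqv⟩ := hcoker
  set ψ : M' →ₗ[A] A ⧸ Ideal.span {f} :=
    eqv.toLinearMap.comp (LinearMap.range φ).mkQ with hψdef
  have hψsurj : Function.Surjective ψ :=
    eqv.surjective.comp (Submodule.mkQ_surjective _)
  have hker : LinearMap.ker ψ = LinearMap.range φ := by
    rw [hψdef, LinearMap.ker_comp, LinearEquiv.ker, Submodule.comap_bot, Submodule.ker_mkQ]
  obtain ⟨c, hc0, hcj⟩ := basis_normalize A f hf r hr M' bM' ψ hψsurj
  -- membership facts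
  have hmem0 : f • c z ∈ LinearMap.range φ := by
    rw [← hker, LinearMap.mem_ker, map_smul, hc0, Algebra.smul_def,
      Ideal.Quotient.algebraMap_eq, mul_one, Ideal.Quotient.eq_zero_iff_mem]
    exact Ideal.subset_span rfl
  have hmemj : ∀ j, j ≠ z → c j ∈ LinearMap.range φ := fun j hj => by
    rw [← hker, LinearMap.mem_ker]; exact hcj j hj
  -- define preimages
  have hv : ∀ j : Fin r, ∃ v : M, φ v = if j = z then f • c z else c j := by
    intro j
    by_cases hj : j = z
    · subst hj; simpa using hmem0
    · rw [if_neg hj]; exact hmemj j hj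
  choose v hvφ using hv
  -- v is linearly independent
  have hind : LinearIndependent A v := by
    rw [Fintype.linearIndependent_iff]
    intro g hg
    have h1 : (∑ i, (if i = z then g z * f else g i) • c i) = 0 := by
      rw [← map_zero φ, ← hg, map_sum]
      refine Finset.sum_congr rfl fun i _ => ?_
      rw [map_smul, hvφ]
      by_cases hi : i = z
      · subst hi; rw [if_pos rfl, if_pos rfl, smul_smul]
      · rw [if_neg hi, if_neg hi]
    have h2 := Fintype.linearIndependent_iff.mp c.linearIndependent _ h1
    intro i
    by_cases hi : i = z
    · subst hi
      have := h2 z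
      rw [if_pos rfl] at this
      exact mem_nonZeroDivisors_iff_right.mp hfnzd _ this
    · have := h2 i
      rwa [if_neg hi] at this
  -- v spans M
  have hspan : ⊤ ≤ Submodule.span A (Set.range v) := by
    intro m _
    set t := c.repr (φ m) with ht
    have hmem : φ m ∈ LinearMap.range φ := ⟨m, rfl⟩
    have hzero : ψ (φ m) = 0 := by rw [← LinearMap.mem_ker, hker]; exact hmem
    have hsum : φ m = ∑ i, t i • c i := (c.sum_repr (φ m)).symm
    have htz : Ideal.Quotient.mk (Ideal.span {f}) (t z) = 0 := by
      rw [← hzero, hsum, map_sum]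
      rw [Finset.sum_eq_single z]
      · rw [map_smul, hc0, Algebra.smul_def, Ideal.Quotient.algebraMap_eq, mul_one]
      · intro i _ hi
        rw [map_smul, hcj i hi, smul_zero]
      · intro h; exact absurd (Finset.mem_univ z) h
    have hdvd : f ∣ t z := by
      rwa [Ideal.Quotient.eq_zero_iff_mem, Ideal.mem_span_singleton] at htz
    obtain ⟨s, hs⟩ := hdvd
    have hrepr : m = ∑ i, (if i = z then s else t i) • v i := by
      apply hφ
      rw [map_sum, hsum]
      refine Finset.sum_congr rfl fun i _ => ?_
      rw [map_smul, hvφ]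
      by_cases hi : i = z
      · subst hi
        rw [if_pos rfl, if_pos rfl, smul_smul, hs, mul_comm]
      · rw [if_neg hi, if_neg hi]
    rw [hrepr]
    exact Submodule.sum_mem _ fun i _ =>
      Submodule.smul_mem _ _ (Submodule.subset_span (Set.mem_range_self i))
  set e : Module.Basis (Fin r) A M := Module.Basis.mk hind hspan with he
  refine ⟨e, c, ?_, ?_⟩
  · rw [he, Module.Basis.mk_apply, hvφ, if_pos rfl]
  · intro i hi
    rw [he, Module.Basis.mk_apply, hvφ, if_neg hi]
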